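/- Let A be a nonempty compact positive definite metric space which possesses a weight measure μ, i.e., a finite signed Borel measure on A with ∫_A exp(-d(a,b)) dμ(b) = 1 for every a ∈ A. Then the magnitude of A (defined as the supremum of magnitudes of finite nonempty subsets) is finite and equals the total mass μ(A). -/

import Mathlib

open Matrix BigOperators MeasureTheory
open scoped ENNReal

/-- The magnitude of a finite subset `s` of a metric space: the sum of the entries of
the inverse of the similarity matrix `[exp (-d(a,b))]_{a,b ∈ s}`. -/
noncomputable def finMag {X : Type*} [MetricSpace X] (s : Finset X) : ℝ :=
  letI : DecidableEq X := Classical.decEq X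
  ∑ a : {x // x ∈ s}, ∑ b : {x // x ∈ s},
    (Matrix.of fun a b : {x // x ∈ s} => Real.exp (-dist (a : X) (b : X)))⁻¹ a b

/-- The magnitude of a compact positive definite metric space, as the supremum (in
`[0,∞]`) of the magnitudes of its finite nonempty subsets. -/
noncomputable def magE {X : Type*} [MetricSpace X] (A : Set X) : ℝ≥0∞ :=
  ⨆ (s : Finset X) (_ : s.Nonempty ∧ ↑s ⊆ A), ENNReal.ofReal (finMag s)

section LinAlg
variable {X : Type*} [MetricSpace X]

/-- the similarity matrix -/
noncomputable abbrev Zmat (s : Finset X) : Matrix {x // x ∈ s} {x // x ∈ s} ℝ :=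
  Matrix.of fun a b : {x // x ∈ s} => Real.exp (-dist (a : X) (b : X))

/-- the weighting vector: row sums of the inverse -/
noncomputable def wvec (s : Finset X) : {x // x ∈ s} → ℝ :=
  letI : DecidableEq X := Classical.decEq X
  fun a => ∑ b : {x // x ∈ s}, (Zmat s)⁻¹ a b

lemma Zmat_symm (s : Finset X) (a b : {x // x ∈ s}) : Zmat s a b = Zmat s b a := by
  simp [Zmat, dist_comm]

lemma Zmat_mulVec_wvec {s : Finset X} (hs : (Zmat s).PosDef) :
    (Zmat s) *ᵥ (wvec s) = 1 := by
  letI : DecidableEq X := Classical.decEq X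
  have h : (Zmat s) *ᵥ ((Zmat s)⁻¹ *ᵥ 1) = 1 := by
    rw [Matrix.mulVec_mulVec, Matrix.mul_nonsing_inv _ hs.det_pos.ne'.isUnit, Matrix.one_mulVec]
  convert h using 2
  ext a
  simp [wvec, Matrix.mulVec, dotProduct]

lemma sum_wvec {s : Finset X} : ∑ a, wvec s a = finMag s := by
  letI : DecidableEq X := Classical.decEq X
  simp [wvec, finMag]

end LinAlg

section Quad
variable {X : Type*} [MetricSpace X]

lemma sum_comp_fiber {ι : Type*} [Fintype ι] [DecidableEq X] {s : Finset X}
    (g : ι → {x // x ∈ s}) (c : ι → ℝ) (h : {x // x ∈ s} → ℝ) :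
    ∑ j, c j * h (g j)
      = ∑ t, (∑ j ∈ Finset.univ.filter (fun j => g j = t), c j) * h t := by
  rw [← Finset.sum_fiberwise_of_maps_to (fun j _ => Finset.mem_univ (g j))
    (fun j => c j * h (g j))]
  refine Finset.sum_congr rfl fun t _ => ?_
  rw [Finset.sum_mul]
  refine Finset.sum_congr rfl fun j hj => ?_
  rw [(Finset.mem_filter.mp hj).2]

lemma dot_symm {s : Finset X} (x y : {x // x ∈ s} → ℝ) :
    x ⬝ᵥ (Zmat s *ᵥ y) = y ⬝ᵥ (Zmat s *ᵥ x) := by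
  simp only [dotProduct, mulVec, Finset.mul_sum]
  rw [Finset.sum_comm]
  refine Finset.sum_congr rfl fun a _ => Finset.sum_congr rfl fun b _ => ?_
  rw [Zmat_symm]
  ring

lemma quad_nonneg
    (hPD : ∀ s : Finset X, s.Nonempty → (Zmat s).PosDef)
    {ι : Type*} [Fintype ι] (f : ι → X) (c : ι → ℝ) :
    0 ≤ ∑ i, ∑ j, c i * c j * Real.exp (-dist (f i) (f j)) := by
  classical
  rcases isEmpty_or_nonempty ι with h | h
  · simp
  · set s := Finset.image f Finset.univ with hs
    have hmem : ∀ i, f i ∈ s := fun i => Finset.mem_image_of_mem f (Finset.mem_univ _)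
    have hsne : s.Nonempty := ⟨f (Classical.arbitrary ι), hmem _⟩
    have hZ := hPD s hsne
    set g : ι → {x // x ∈ s} := fun i => ⟨f i, hmem i⟩ with hg
    set v : {x // x ∈ s} → ℝ :=
      fun t => ∑ j ∈ Finset.univ.filter (fun j => g j = t), c j with hv
    have key : ∑ i, ∑ j, c i * c j * Real.exp (-dist (f i) (f j))
        = v ⬝ᵥ (Zmat s *ᵥ v) := by
      have h1 : ∀ i, ∑ j, c j * Real.exp (-dist (f i) (f j))
          = ∑ t, v t * Zmat s (g i) t := by
        intro i
        exact sum_comp_fiber g c (fun t => Zmat s (g i) (t : {x // x ∈ s}))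
      calc ∑ i, ∑ j, c i * c j * Real.exp (-dist (f i) (f j))
          = ∑ i, c i * ∑ j, c j * Real.exp (-dist (f i) (f j)) := by
            refine Finset.sum_congr rfl fun i _ => ?_
            rw [Finset.mul_sum]; refine Finset.sum_congr rfl fun j _ => by ring
        _ = ∑ i, c i * ∑ t, v t * Zmat s (g i) t := by
            refine Finset.sum_congr rfl fun i _ => by rw [h1]
        _ = ∑ u, v u * ∑ t, v t * Zmat s u t :=
            sum_comp_fiber g c (fun u => ∑ t, v t * Zmat s u t)
        _ = v ⬝ᵥ (Zmat s *ᵥ v) := by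
            simp only [dotProduct, mulVec]
            refine Finset.sum_congr rfl fun u _ => ?_
            rw [Finset.mul_sum, Finset.mul_sum]
            refine Finset.sum_congr rfl fun t _ => by ring
    rw [key]
    simpa using hZ.posSemidef.dotProduct_mulVec_nonneg v

end Quad

section CS
variable {X : Type*} [MetricSpace X]

lemma wZw {s : Finset X} (hZ : (Zmat s).PosDef) :
    wvec s ⬝ᵥ (Zmat s *ᵥ wvec s) = finMag s := by
  rw [Zmat_mulVec_wvec hZ]
  simpa [dotProduct, Finset.univ_eq_attach] using (sum_wvec (s := s))

lemma finMag_pos {s : Finset X} (hs : s.Nonempty) (hZ : (Zmat s).PosDef) :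
    0 < finMag s := by
  have hne : Nonempty {x // x ∈ s} := ⟨⟨hs.choose, hs.choose_spec⟩⟩
  have hw : wvec s ≠ 0 := by
    intro h
    have := Zmat_mulVec_wvec hZ
    rw [h, Matrix.mulVec_zero] at this
    have := congrFun this (Classical.arbitrary _)
    simp at this
  have := hZ.dotProduct_mulVec_pos hw
  rw [star_trivial, wZw hZ] at this
  exact this

lemma cauchy_schwarz {s : Finset X} (hs : s.Nonempty) (hZ : (Zmat s).PosDef)
    (v : {x // x ∈ s} → ℝ) :
    (∑ t, v t) ^ 2 ≤ finMag s * (v ⬝ᵥ (Zmat s *ᵥ v)) := by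
  set m := finMag s with hm
  have hm0 : 0 < m := finMag_pos hs hZ
  set α : ℝ := (∑ t, v t) / m with hα
  set u : {x // x ∈ s} → ℝ := v - α • wvec s with hu
  have h0 : 0 ≤ u ⬝ᵥ (Zmat s *ᵥ u) := by simpa using hZ.posSemidef.dotProduct_mulVec_nonneg u
  have hvZw : v ⬝ᵥ (Zmat s *ᵥ wvec s) = ∑ t, v t := by
    rw [Zmat_mulVec_wvec hZ]; simp [dotProduct]
  have hwZv : wvec s ⬝ᵥ (Zmat s *ᵥ v) = ∑ t, v t := by
    rw [dot_symm, hvZw]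
  have hexp : u ⬝ᵥ (Zmat s *ᵥ u)
      = v ⬝ᵥ (Zmat s *ᵥ v) - 2 * α * (∑ t, v t) + α ^ 2 * m := by
    rw [hu]
    simp only [Matrix.mulVec_sub, Matrix.mulVec_smul, dotProduct_sub, sub_dotProduct,
      dotProduct_smul, smul_dotProduct, smul_eq_mul, hvZw, hwZv, wZw hZ, ← hm]
    ring
  rw [hexp, hα] at h0
  set S := ∑ t, v t with hS
  set Q := v ⬝ᵥ (Zmat s *ᵥ v) with hQ
  have hα3 : (S / m) ^ 2 * m = S ^ 2 / m := by field_simp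
  have h0' : 0 ≤ Q - S ^ 2 / m := by
    have h2 : 2 * (S / m) * S = 2 * (S ^ 2 / m) := by ring
    rw [h2, hα3] at h0
    linarith
  have h1 : S ^ 2 / m ≤ Q := by linarith
  have := (div_le_iff₀ hm0).mp h1
  linarith [this, mul_comm Q m]

end CS

section Approx
variable {X : Type*} [MetricSpace X]

lemma exp_dist_close (a : X) {y t : X} {δ : ℝ} (h : dist y t ≤ δ) :
    |Real.exp (-dist a y) - Real.exp (-dist a t)| ≤ δ := by
  have key : ∀ u v : X, dist a u ≤ dist a v → dist u v ≤ δ →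
      |Real.exp (-dist a v) - Real.exp (-dist a u)| ≤ δ := by
    intro u v huv hd
    have h1 : Real.exp (-dist a v) ≤ Real.exp (-dist a u) := Real.exp_le_exp.mpr (by linarith)
    rw [abs_of_nonpos (by linarith), neg_sub]
    have h2 : dist a v - dist a u ≤ δ := by
      have := abs_dist_sub_le v u a
      rw [dist_comm v a, dist_comm u a] at this
      have h3 := (abs_le.mp this).2
      have h9 : dist v u ≤ δ := by rwa [dist_comm]
      linarith
    have h4 : Real.exp (-dist a u) ≤ 1 := Real.exp_le_one_iff.mpr (neg_nonpos.mpr dist_nonneg)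
    have h5 : Real.exp (-dist a v) = Real.exp (-dist a u) * Real.exp (dist a u - dist a v) := by
      rw [← Real.exp_add]; ring_nf
    have h6 : 1 - (dist a v - dist a u) ≤ Real.exp (dist a u - dist a v) := by
      have := Real.add_one_le_exp (dist a u - dist a v); linarith
    have h7 : 0 < Real.exp (-dist a u) := Real.exp_pos _
    have h8 : 0 ≤ dist a v - dist a u := by linarith
    have k1 := mul_le_mul_of_nonneg_left h6 h7.le
    have k2 := mul_le_mul_of_nonneg_right h4 h8
    nlinarith [k1, k2]
  rcases le_total (dist a t) (dist a y) with hc | hc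
  · exact key t y hc (by rwa [dist_comm])
  · rw [abs_sub_comm]; exact key y t hc h

variable [CompactSpace X] [Nonempty X] [MeasurableSpace X] [BorelSpace X]

lemma exists_approx (μp μn : Measure X) [IsFiniteMeasure μp] [IsFiniteMeasure μn]
    (hweight : ∀ a : X,
      (∫ b, Real.exp (-dist a b) ∂μp) - (∫ b, Real.exp (-dist a b) ∂μn) = 1)
    {δ : ℝ} (hδ : 0 < δ) :
    ∃ T : Finset X, T.Nonempty ∧ ∃ ν : {x // x ∈ T} → ℝ,
      (∑ t, ν t = (μp Set.univ).toReal - (μn Set.univ).toReal) ∧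
      (∑ t, |ν t| ≤ (μp Set.univ).toReal + (μn Set.univ).toReal) ∧
      (∀ a : X, |∑ t, ν t * Real.exp (-dist a (t : X)) - 1|
        ≤ δ * ((μp Set.univ).toReal + (μn Set.univ).toReal)) := by
  classical
  obtain ⟨t0, -, hfin, hcov⟩ :=
    finite_cover_balls_of_compact (isCompact_univ : IsCompact (Set.univ : Set X)) hδ
  set T : Finset X := hfin.toFinset with hT
  have hcov' : ∀ x : X, ∃ t ∈ T, dist x t < δ := by
    intro x
    have := hcov (Set.mem_univ x)
    simp only [Set.mem_iUnion, Metric.mem_ball] at this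
    obtain ⟨y, hy, hxy⟩ := this
    exact ⟨y, hfin.mem_toFinset.mpr hy, hxy⟩
  have hTne : T.Nonempty := by
    obtain ⟨t, ht, -⟩ := hcov' (Classical.arbitrary X)
    exact ⟨t, ht⟩
  set n := T.card with hn
  set e : {x // x ∈ T} ≃ Fin n := T.equivFin with he
  set c : Fin n → X := fun i => (e.symm i : X) with hc
  set E : Fin n → Set X :=
    fun i => Metric.ball (c i) δ \ ⋃ (j : Fin n) (_ : j < i), Metric.ball (c j) δ with hE
  have hmeas : ∀ i, MeasurableSet (E i) := fun i =>
    Metric.isOpen_ball.measurableSet.diff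
      (MeasurableSet.iUnion fun j => MeasurableSet.iUnion fun _ =>
        Metric.isOpen_ball.measurableSet)
  have hdisj : Pairwise (Function.onFun Disjoint E) := by
    intro i j hij
    have key : ∀ i j : Fin n, i < j → Disjoint (E i) (E j) := by
      intro i j hij
      rw [Set.disjoint_left]
      intro x hxi hxj
      have h1 : x ∈ Metric.ball (c i) δ := hxi.1
      exact hxj.2 (Set.mem_iUnion.mpr ⟨i, Set.mem_iUnion.mpr ⟨hij, h1⟩⟩)
    rcases lt_or_gt_of_ne hij with h | h
    · exact key _ _ h
    · exact (key _ _ h).symm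
  have hcover : ⋃ i, E i = Set.univ := by
    refine Set.eq_univ_iff_forall.mpr fun x => Set.mem_iUnion.mpr ?_
    have hex : ∃ i : Fin n, x ∈ Metric.ball (c i) δ := by
      obtain ⟨t, ht, hxt⟩ := hcov' x
      exact ⟨e ⟨t, ht⟩, by simpa [hc, Metric.mem_ball, dist_comm] using hxt⟩
    set s := Finset.univ.filter (fun i => x ∈ Metric.ball (c i) δ) with hs
    obtain ⟨i0, hi0⟩ := hex
    have hsne : s.Nonempty := ⟨i0, Finset.mem_filter.mpr ⟨Finset.mem_univ _, hi0⟩⟩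
    refine ⟨s.min' hsne, ?_, ?_⟩
    · have := s.min'_mem hsne
      simp only [hs, Finset.mem_filter] at this
      exact this.2
    · intro hmem
      rw [Set.mem_iUnion] at hmem
      obtain ⟨j, hmem⟩ := hmem
      rw [Set.mem_iUnion] at hmem
      obtain ⟨hji, hj⟩ := hmem
      have : s.min' hsne ≤ j := s.min'_le j (Finset.mem_filter.mpr ⟨Finset.mem_univ _, hj⟩)
      exact absurd hji (not_lt.mpr this)
  have hdistE : ∀ (i : Fin n), ∀ y ∈ E i, dist y (c i) ≤ δ := by
    intro i y hy
    exact le_of_lt (Metric.mem_ball.mp hy.1)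
  -- total measure identity
  have hsum_meas : ∀ (μ : Measure X) [IsFiniteMeasure μ],
      ∑ i, (μ (E i)).toReal = (μ Set.univ).toReal := by
    intro μ _
    have h1 : μ Set.univ = ∑ i, μ (E i) := by
      rw [← hcover, measure_iUnion hdisj hmeas, tsum_fintype]
    rw [h1, ENNReal.toReal_sum fun i _ => measure_ne_top μ (E i)]
  -- integral estimate
  have est : ∀ (a : X) (μ : Measure X) [IsFiniteMeasure μ],
      |∑ i, (μ (E i)).toReal * Real.exp (-dist a (c i))
        - ∫ b, Real.exp (-dist a b) ∂μ| ≤ δ * (μ Set.univ).toReal := by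
    intro a μ _
    have hfc : Continuous fun y : X => Real.exp (-dist a y) :=
      Real.continuous_exp.comp ((continuous_const.dist continuous_id).neg)
    have hint : Integrable (fun y : X => Real.exp (-dist a y)) μ := by
      have := hfc.continuousOn.integrableOn_compact'
        (isCompact_univ : IsCompact (Set.univ : Set X)) MeasurableSet.univ (μ := μ)
      rwa [MeasureTheory.integrableOn_univ] at this
    have hsplit : ∫ b, Real.exp (-dist a b) ∂μ
        = ∑ i, ∫ y in E i, Real.exp (-dist a y) ∂μ := by
      rw [← MeasureTheory.setIntegral_univ, ← hcover,
        MeasureTheory.integral_iUnion_fintype hmeas hdisj fun i => hint.integrableOn]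
    have hterm : ∀ i : Fin n,
        |(μ (E i)).toReal * Real.exp (-dist a (c i))
          - ∫ y in E i, Real.exp (-dist a y) ∂μ| ≤ δ * (μ (E i)).toReal := by
      intro i
      have hconst : (μ (E i)).toReal * Real.exp (-dist a (c i))
          = ∫ _ in E i, Real.exp (-dist a (c i)) ∂μ := by
        rw [MeasureTheory.setIntegral_const, smul_eq_mul, measureReal_def]
      rw [hconst, ← MeasureTheory.integral_sub (MeasureTheory.integrable_const _)
        hint.integrableOn]
      have habs : |∫ y in E i, (Real.exp (-dist a (c i)) - Real.exp (-dist a y)) ∂μ|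
          ≤ ∫ y in E i, |Real.exp (-dist a (c i)) - Real.exp (-dist a y)| ∂μ := by
        have := MeasureTheory.norm_integral_le_integral_norm
          (μ := μ.restrict (E i)) (fun y => Real.exp (-dist a (c i)) - Real.exp (-dist a y))
        simpa [Real.norm_eq_abs] using this
      calc |∫ y in E i, (Real.exp (-dist a (c i)) - Real.exp (-dist a y)) ∂μ|
          ≤ ∫ y in E i, |Real.exp (-dist a (c i)) - Real.exp (-dist a y)| ∂μ := habs
        _ ≤ ∫ _ in E i, δ ∂μ := by
            refine MeasureTheory.setIntegral_mono_on
              ((MeasureTheory.integrable_const _).sub hint.integrableOn).abs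
              (MeasureTheory.integrable_const _) (hmeas i) fun y hy => ?_
            rw [abs_sub_comm]
            exact exp_dist_close a (hdistE i y hy)
        _ = δ * (μ (E i)).toReal := by
            rw [MeasureTheory.setIntegral_const, smul_eq_mul, mul_comm, measureReal_def]
    calc |∑ i, (μ (E i)).toReal * Real.exp (-dist a (c i))
          - ∫ b, Real.exp (-dist a b) ∂μ|
        = |∑ i, ((μ (E i)).toReal * Real.exp (-dist a (c i))
            - ∫ y in E i, Real.exp (-dist a y) ∂μ)| := by
          rw [hsplit, Finset.sum_sub_distrib]
      _ ≤ ∑ i, |(μ (E i)).toReal * Real.exp (-dist a (c i))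
            - ∫ y in E i, Real.exp (-dist a y) ∂μ| := Finset.abs_sum_le_sum_abs _ _
      _ ≤ ∑ i, δ * (μ (E i)).toReal := Finset.sum_le_sum fun i _ => hterm i
      _ = δ * (μ Set.univ).toReal := by rw [← Finset.mul_sum, hsum_meas μ]
  -- define ν
  set νF : Fin n → ℝ := fun i => (μp (E i)).toReal - (μn (E i)).toReal with hνF
  refine ⟨T, hTne, fun t => νF (e t), ?_, ?_, ?_⟩
  · rw [Fintype.sum_equiv e _ νF fun t => rfl]
    rw [Finset.sum_sub_distrib, hsum_meas μp, hsum_meas μn]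
  · rw [Fintype.sum_equiv e _ (fun i => |νF i|) fun t => rfl]
    calc ∑ i, |νF i| ≤ ∑ i, ((μp (E i)).toReal + (μn (E i)).toReal) :=
          Finset.sum_le_sum fun i _ => by
            have := abs_sub ((μp (E i)).toReal) ((μn (E i)).toReal)
            rwa [abs_of_nonneg ENNReal.toReal_nonneg, abs_of_nonneg ENNReal.toReal_nonneg]
              at this
      _ = (μp Set.univ).toReal + (μn Set.univ).toReal := by
          rw [Finset.sum_add_distrib, hsum_meas μp, hsum_meas μn]
  · intro a
    have h1 : ∑ t : {x // x ∈ T}, νF (e t) * Real.exp (-dist a (t : X))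
        = ∑ i, νF i * Real.exp (-dist a (c i)) := by
      refine Fintype.sum_equiv e _ _ fun t => ?_
      simp [hc]
    rw [h1]
    have hp := est a μp
    have hq := est a μn
    have hw := hweight a
    have hsub : ∑ i, νF i * Real.exp (-dist a (c i))
        = (∑ i, (μp (E i)).toReal * Real.exp (-dist a (c i)))
          - ∑ i, (μn (E i)).toReal * Real.exp (-dist a (c i)) := by
      rw [← Finset.sum_sub_distrib]
      exact Finset.sum_congr rfl fun i _ => by rw [hνF]; ring
    rw [hsub]
    set Ap := ∑ i, (μp (E i)).toReal * Real.exp (-dist a (c i))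
    set An := ∑ i, (μn (E i)).toReal * Real.exp (-dist a (c i))
    set Ip := ∫ b, Real.exp (-dist a b) ∂μp
    set In := ∫ b, Real.exp (-dist a b) ∂μn
    have : Ap - An - 1 = (Ap - Ip) - (An - In) := by rw [← hw]; ring
    rw [this]
    calc |(Ap - Ip) - (An - In)| ≤ |Ap - Ip| + |An - In| := abs_sub _ _
      _ ≤ δ * (μp Set.univ).toReal + δ * (μn Set.univ).toReal := add_le_add hp hq
      _ = δ * ((μp Set.univ).toReal + (μn Set.univ).toReal) := by ring
end Approx

section Main
variable {X : Type*} [MetricSpace X] [CompactSpace X] [Nonempty X]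
    [MeasurableSpace X] [BorelSpace X]

lemma double_sum_eq_dot {s : Finset X} (v u : {x // x ∈ s} → ℝ) :
    ∑ t, ∑ t', v t * u t' * Real.exp (-dist (t : X) (t' : X))
      = v ⬝ᵥ (Zmat s *ᵥ u) := by
  simp only [dotProduct, mulVec, Finset.mul_sum]
  exact Finset.sum_congr rfl fun t _ => Finset.sum_congr rfl fun t' _ => by
    simp only [Zmat, Matrix.of_apply]; ring

lemma dir1 (hPD : ∀ s : Finset X, s.Nonempty → (Zmat s).PosDef)
    (μp μn : Measure X) [IsFiniteMeasure μp] [IsFiniteMeasure μn]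
    (hweight : ∀ a : X,
      (∫ b, Real.exp (-dist a b) ∂μp) - (∫ b, Real.exp (-dist a b) ∂μn) = 1)
    (B : Finset X) (hB : B.Nonempty) :
    finMag B ≤ (μp Set.univ).toReal - (μn Set.univ).toReal := by
  set P := (μp Set.univ).toReal with hP
  set N := (μn Set.univ).toReal with hN
  have hP0 : 0 ≤ P := ENNReal.toReal_nonneg
  have hN0 : 0 ≤ N := ENNReal.toReal_nonneg
  set W := ∑ a, |wvec B a| with hWdef
  have hW0 : 0 ≤ W := Finset.sum_nonneg fun _ _ => abs_nonneg _
  set C := (P + N) * (2 * W + (P + N)) with hCdef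
  have hC0 : 0 ≤ C := by positivity
  refine le_of_forall_pos_le_add fun ε hε => ?_
  set δ := ε / (C + 1) with hδdef
  have hδ : 0 < δ := by positivity
  obtain ⟨T, hTne, ν, hν1, hν2, hν3⟩ := exists_approx μp μn hweight hδ
  set η := δ * (P + N) with hηdef
  have hη0 : 0 ≤ η := by positivity
  have hZB := hPD B hB
  have inner1 : ∀ a : {x // x ∈ B},
      ∑ b, wvec B b * Real.exp (-dist (a : X) (b : X)) = 1 := by
    intro a
    have h := congrFun (Zmat_mulVec_wvec hZB) a
    simp only [mulVec, dotProduct, Pi.one_apply] at h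
    rw [← h]
    exact Finset.sum_congr rfl fun b _ => by
      simp only [Zmat, Matrix.of_apply]; ring
  set SA : {x // x ∈ B} → ℝ :=
    fun a => ∑ t, ν t * Real.exp (-dist (a : X) (t : X)) with hSA
  set SB : {x // x ∈ T} → ℝ :=
    fun t => ∑ t', ν t' * Real.exp (-dist (t : X) (t' : X)) with hSB
  have h0 := quad_nonneg hPD (ι := {x // x ∈ B} ⊕ {x // x ∈ T})
    (Sum.elim (fun a => (a : X)) (fun t => (t : X)))
    (Sum.elim (wvec B) (fun t => -ν t))
  simp only [Fintype.sum_sum_type, Sum.elim_inl, Sum.elim_inr] at h0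
  rw [Finset.sum_add_distrib, Finset.sum_add_distrib] at h0
  -- identify four blocks
  have F1 : ∑ a : {x // x ∈ B}, ∑ b : {x // x ∈ B},
      wvec B a * wvec B b * Real.exp (-dist (a : X) (b : X)) = finMag B := by
    rw [← sum_wvec (s := B)]
    refine Finset.sum_congr rfl fun a _ => ?_
    have h : ∑ b : {x // x ∈ B}, wvec B a * wvec B b * Real.exp (-dist (a:X) (b:X))
        = wvec B a * ∑ b, wvec B b * Real.exp (-dist (a:X) (b:X)) := by
      rw [Finset.mul_sum]; exact Finset.sum_congr rfl fun b _ => by ring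
    rw [h, inner1 a, mul_one]
  have F2 : ∑ a : {x // x ∈ B}, ∑ t : {x // x ∈ T},
      wvec B a * (-ν t) * Real.exp (-dist (a : X) (t : X))
      = -∑ a, wvec B a * SA a := by
    rw [← Finset.sum_neg_distrib]
    refine Finset.sum_congr rfl fun a _ => ?_
    rw [hSA, Finset.mul_sum, ← Finset.sum_neg_distrib]
    exact Finset.sum_congr rfl fun t _ => by ring
  have F3 : ∑ t : {x // x ∈ T}, ∑ a : {x // x ∈ B},
      (-ν t) * wvec B a * Real.exp (-dist (t : X) (a : X))
      = -∑ a, wvec B a * SA a := by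
    rw [Finset.sum_comm, ← Finset.sum_neg_distrib]
    refine Finset.sum_congr rfl fun a _ => ?_
    rw [hSA, Finset.mul_sum, ← Finset.sum_neg_distrib]
    refine Finset.sum_congr rfl fun t _ => ?_
    rw [dist_comm]
    ring
  have F4 : ∑ t : {x // x ∈ T}, ∑ t' : {x // x ∈ T},
      (-ν t) * (-ν t') * Real.exp (-dist (t : X) (t' : X))
      = ∑ t, ν t * SB t := by
    refine Finset.sum_congr rfl fun t _ => ?_
    rw [hSB, Finset.mul_sum]
    exact Finset.sum_congr rfl fun t' _ => by ring
  rw [F1, F2, F3, F4] at h0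
  -- estimates
  have E1 : |(∑ a, wvec B a * SA a) - finMag B| ≤ η * W := by
    have h : (∑ a, wvec B a * SA a) - finMag B = ∑ a, wvec B a * (SA a - 1) := by
      rw [← sum_wvec (s := B), ← Finset.sum_sub_distrib]
      exact Finset.sum_congr rfl fun a _ => by ring
    rw [h]
    calc |∑ a, wvec B a * (SA a - 1)| ≤ ∑ a, |wvec B a * (SA a - 1)| :=
          Finset.abs_sum_le_sum_abs _ _
      _ ≤ ∑ a, |wvec B a| * η := by
          refine Finset.sum_le_sum fun a _ => ?_
          rw [abs_mul]
          exact mul_le_mul_of_nonneg_left (hν3 (a : X)) (abs_nonneg _)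
      _ = η * W := by rw [← Finset.sum_mul, mul_comm]
  have E2 : ∑ t, ν t * SB t ≤ (P - N) + η * (P + N) := by
    have h : ∑ t, ν t * SB t = (∑ t, ν t) + ∑ t, ν t * (SB t - 1) := by
      rw [← Finset.sum_add_distrib]
      exact Finset.sum_congr rfl fun t _ => by ring
    rw [h, hν1]
    refine add_le_add_right ?_ _
    calc ∑ t, ν t * (SB t - 1) ≤ |∑ t, ν t * (SB t - 1)| := le_abs_self _
      _ ≤ ∑ t, |ν t * (SB t - 1)| := Finset.abs_sum_le_sum_abs _ _
      _ ≤ ∑ t, |ν t| * η := by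
          refine Finset.sum_le_sum fun t _ => ?_
          rw [abs_mul]
          exact mul_le_mul_of_nonneg_left (hν3 (t : X)) (abs_nonneg _)
      _ = (∑ t, |ν t|) * η := by rw [Finset.sum_mul]
      _ ≤ (P + N) * η := mul_le_mul_of_nonneg_right hν2 hη0
      _ = η * (P + N) := mul_comm _ _
  -- combine
  have hWa : finMag B - η * W ≤ ∑ a, wvec B a * SA a := by
    have := abs_le.mp E1
    linarith [this.1]
  have hfinal : finMag B ≤ (P - N) + δ * C := by
    have hηC : 2 * (η * W) + η * (P + N) = δ * C := by rw [hηdef, hCdef]; ring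
    linarith [h0, hWa, E2, hηC]
  have hδC : δ * C ≤ ε := by
    rw [hδdef]
    rw [div_mul_eq_mul_div, div_le_iff₀ (by positivity : (0:ℝ) < C + 1)]
    nlinarith [hε.le, hC0]
  linarith

lemma dir2 (hPD : ∀ s : Finset X, s.Nonempty → (Zmat s).PosDef)
    (μp μn : Measure X) [IsFiniteMeasure μp] [IsFiniteMeasure μn]
    (hweight : ∀ a : X,
      (∫ b, Real.exp (-dist a b) ∂μp) - (∫ b, Real.exp (-dist a b) ∂μn) = 1)
    {ε : ℝ} (hε : 0 < ε) :
    ∃ T : Finset X, T.Nonempty ∧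
      (μp Set.univ).toReal - (μn Set.univ).toReal - ε ≤ finMag T := by
  set P := (μp Set.univ).toReal with hP
  set N := (μn Set.univ).toReal with hN
  have hP0 : 0 ≤ P := ENNReal.toReal_nonneg
  have hN0 : 0 ≤ N := ENNReal.toReal_nonneg
  set M := P - N with hM
  -- M > 0
  have hMpos : 0 < M := by
    set B : Finset X := {Classical.arbitrary X} with hB
    have hBne : B.Nonempty := ⟨Classical.arbitrary X, Finset.mem_singleton_self _⟩
    have h1 := finMag_pos hBne (hPD B hBne)
    have h2 := dir1 hPD μp μn hweight B hBne
    linarith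
  set δ := ε / ((P + N) ^ 2 + 1) with hδdef
  have hδ : 0 < δ := by positivity
  obtain ⟨T, hTne, ν, hν1, hν2, hν3⟩ := exists_approx μp μn hweight hδ
  refine ⟨T, hTne, ?_⟩
  set κ := δ * (P + N) ^ 2 with hκdef
  have hκ0 : 0 ≤ κ := by positivity
  have hκε : κ ≤ ε := by
    rw [hκdef, hδdef, div_mul_eq_mul_div, div_le_iff₀ (by positivity : (0:ℝ) < (P+N)^2 + 1)]
    nlinarith [hε.le, sq_nonneg (P + N)]
  set Q := ν ⬝ᵥ (Zmat T *ᵥ ν) with hQdef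
  set SB : {x // x ∈ T} → ℝ :=
    fun t => ∑ t', ν t' * Real.exp (-dist (t : X) (t' : X)) with hSB
  have hQ1 : Q = ∑ t, ν t * SB t := by
    rw [hQdef, ← double_sum_eq_dot]
    refine Finset.sum_congr rfl fun t _ => ?_
    rw [hSB, Finset.mul_sum]
    exact Finset.sum_congr rfl fun t' _ => by ring
  have hQ2 : Q ≤ M + κ := by
    rw [hQ1]
    have h : ∑ t, ν t * SB t = (∑ t, ν t) + ∑ t, ν t * (SB t - 1) := by
      rw [← Finset.sum_add_distrib]
      exact Finset.sum_congr rfl fun t _ => by ring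
    rw [h, hν1]
    have : ∑ t, ν t * (SB t - 1) ≤ κ := by
      calc ∑ t, ν t * (SB t - 1) ≤ |∑ t, ν t * (SB t - 1)| := le_abs_self _
        _ ≤ ∑ t, |ν t * (SB t - 1)| := Finset.abs_sum_le_sum_abs _ _
        _ ≤ ∑ t, |ν t| * (δ * (P + N)) := by
            refine Finset.sum_le_sum fun t _ => ?_
            rw [abs_mul]
            exact mul_le_mul_of_nonneg_left (hν3 (t : X)) (abs_nonneg _)
        _ = (∑ t, |ν t|) * (δ * (P + N)) := by rw [Finset.sum_mul]
        _ ≤ (P + N) * (δ * (P + N)) := by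
            refine mul_le_mul_of_nonneg_right hν2 (by positivity)
        _ = κ := by rw [hκdef]; ring
    linarith
  have hCS := cauchy_schwarz hTne (hPD T hTne) ν
  rw [hν1, ← hQdef] at hCS
  have hfT : 0 < finMag T := finMag_pos hTne (hPD T hTne)
  have hMκ : 0 < M + κ := by linarith
  have h1 : (M - ε) * (M + κ) ≤ M ^ 2 := by nlinarith
  have h2 : M ^ 2 ≤ finMag T * (M + κ) := by nlinarith [hCS, hQ2, hfT.le]
  have := le_of_mul_le_mul_right (h1.trans h2) hMκ
  linarith

end Main


/-- If a nonempty compact positive definite metric space `X` possesses a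
weight measure (a finite signed Borel measure `μ = μp - μn` satisfying
`∫ exp (-d(a,b)) dμ(b) = 1` for all `a`), then its magnitude is finite and equals the
total mass `μ(X)`. -/
theorem stmt_7 {X : Type*} [MetricSpace X] [CompactSpace X] [Nonempty X]
    [MeasurableSpace X] [BorelSpace X]
    (hPD : ∀ s : Finset X, s.Nonempty →
      (Matrix.of fun a b : {x // x ∈ s} => Real.exp (-dist (a : X) (b : X))).PosDef)
    (μp μn : Measure X) [IsFiniteMeasure μp] [IsFiniteMeasure μn]
    (hweight : ∀ a : X,
      (∫ b, Real.exp (-dist a b) ∂μp) - (∫ b, Real.exp (-dist a b) ∂μn) = 1) :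
    magE (Set.univ : Set X) ≠ ∞ ∧
    magE (Set.univ : Set X) =
      ENNReal.ofReal ((μp Set.univ).toReal - (μn Set.univ).toReal) := by
  have hPD' : ∀ s : Finset X, s.Nonempty → (Zmat s).PosDef := hPD
  set M := (μp Set.univ).toReal - (μn Set.univ).toReal with hM
  have hupper : magE (Set.univ : Set X) ≤ ENNReal.ofReal M := by
    rw [magE]
    exact iSup₂_le fun s hs =>
      ENNReal.ofReal_le_ofReal (dir1 hPD' μp μn hweight s hs.1)
  have hlower : ENNReal.ofReal M ≤ magE (Set.univ : Set X) := by
    refine ENNReal.le_of_forall_pos_le_add fun ε hε _ => ?_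
    obtain ⟨T, hTne, hT⟩ := dir2 hPD' μp μn hweight (ε := (ε : ℝ)) (by exact_mod_cast hε)
    have hle : ENNReal.ofReal (finMag T) ≤ magE (Set.univ : Set X) := by
      rw [magE]
      exact le_iSup₂ (f := fun (s : Finset X) (_ : s.Nonempty ∧ ↑s ⊆ (Set.univ : Set X)) =>
        ENNReal.ofReal (finMag s)) T ⟨hTne, Set.subset_univ _⟩
    calc ENNReal.ofReal M ≤ ENNReal.ofReal (finMag T + (ε : ℝ)) :=
          ENNReal.ofReal_le_ofReal (by linarith)
      _ ≤ ENNReal.ofReal (finMag T) + ENNReal.ofReal (ε : ℝ) := ENNReal.ofReal_add_le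
      _ ≤ magE (Set.univ : Set X) + ε := by
          rw [ENNReal.ofReal_coe_nnreal]
          exact add_le_add_left hle _
  exact ⟨(hupper.trans_lt ENNReal.ofReal_lt_top).ne, le_antisymm hupper hlower⟩
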